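/- There exists c₀ > 0 and a constant such that for all 0 < c < 1 and all w in the exterior disc Δ with |w − e^{iβ}| ≤ β/2, the slit map f_c satisfies |f_c(w) − 1| = 2(e^c − 1)^{1/4}·|w − e^{iβ}|^{1/2}·(1 + O( (|w − e^{iβ}|/c^{1/2}) ∨ (c^{1/4}|w − e^{iβ}|^{1/2}) )). -/

import Mathlib

open Complex Real

/-- Möbius map from the exterior disc to the upper half-plane. -/
noncomputable def mHalf (w : ℂ) : ℂ := Complex.I * (w - 1) / (w + 1)

/-- Möbius map from the upper half-plane to the exterior disc. -/
noncomputable def mDisc (z : ℂ) : ℂ := (1 - Complex.I * z) / (1 + Complex.I * z)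

/-- The argument of a complex number taken in `(0, 2π)` (for `w ∉ [0,∞)`). -/
noncomputable def argPos (w : ℂ) : ℝ :=
  if Complex.arg w ≤ 0 then Complex.arg w + 2 * π else Complex.arg w

/-- The branch of the square root with `arg : ℂ \ [0,∞) → (0, 2π)`. -/
noncomputable def sqrtBranch (w : ℂ) : ℂ :=
  (Real.sqrt ‖w‖ : ℂ) * Complex.exp (Complex.I * ((argPos w / 2 : ℝ) : ℂ))

/-- The half-plane slit map `f̃_c(ζ) = e^{-c/2}·√(ζ² − (e^c − 1))`. -/
noncomputable def halfPlaneSlit (c : ℝ) (ζ : ℂ) : ℂ :=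
  (Real.exp (-c / 2) : ℂ) * sqrtBranch (ζ ^ 2 - ((Real.exp c - 1 : ℝ) : ℂ))

/-- The exterior unit-disc slit map `f_c = m_Δ ∘ f̃_c ∘ m_ℍ`. -/
noncomputable def slitMap (c : ℝ) (w : ℂ) : ℂ := mDisc (halfPlaneSlit c (mHalf w))

/-- The base-point preimage `e^{iβ(c)} = 2e^{-c} − 1 + 2i·e^{-c}·√(e^c − 1)`. -/
noncomputable def basePt (c : ℝ) : ℂ :=
  ((2 * Real.exp (-c) - 1 : ℝ) : ℂ) +
    ((2 * Real.exp (-c) * Real.sqrt (Real.exp c - 1) : ℝ) : ℂ) * Complex.I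

/-- The base-point angle `β(c) ∈ (0, π)`. -/
noncomputable def βangle (c : ℝ) : ℝ := Complex.arg (basePt c)

set_option maxHeartbeats 4000000

lemma abs_sqrtBranch (u : ℂ) :
    ‖sqrtBranch u‖ = Real.sqrt (‖u‖) := by
  rw [sqrtBranch, norm_mul, Complex.norm_real, Real.norm_eq_abs, Complex.norm_exp]
  simp [Real.sqrt_nonneg, _root_.abs_of_nonneg]


private lemma two_rpow_le : (2:ℝ) ^ ((1:ℝ)/4) ≤ 1.2 := by
  have h24 : ((2:ℝ) ^ ((1:ℝ)/4))^4 = 2 := by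
    rw [← Real.rpow_natCast ((2:ℝ) ^ ((1:ℝ)/4)) 4, ← Real.rpow_mul (by norm_num : (0:ℝ) ≤ 2)]
    norm_num
  nlinarith [Real.rpow_nonneg (by norm_num : (0:ℝ) ≤ 2) ((1:ℝ)/4), h24,
    sq_nonneg ((2:ℝ) ^ ((1:ℝ)/4) - 1.2), sq_nonneg (((2:ℝ) ^ ((1:ℝ)/4))^2 - 1.44)]

private lemma mDisc_sub_one (z : ℂ) (h : 1 + Complex.I * z ≠ 0) :
    mDisc z - 1 = -(2*Complex.I*z)/(1 + Complex.I*z) := by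
  rw [mDisc]
  field_simp
  ring

private lemma cancel_helper (L N A : ℝ) (hN : N ≠ 0) (hA : A ≠ 0) :
    2*A*(2*L/N/(2*A)) = 2*L/N := by
  field_simp

private lemma key_ineq (E sc sa r t u v q p L : ℝ)
    (hEpos : 0 < E) (hE1 : E ≤ 1) (hsc_pos : 0 < sc) (hsa_pos : 0 < sa)
    (hsc_le_sa : sc ≤ sa) (hr_pos : 0 < r)
    (hu_pos : 0 < u) (hv_pos : 0 < v) (hv_ub : v ≤ 2)
    (huv : |u - v| ≤ r) (huv33 : 3.42 ≤ u*v)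
    (hq_nonneg : 0 ≤ q) (hqId : q*(u*v) = 2*r) (hq_ub : q ≤ 0.6*r)
    (hp2sa : |p - 2*sa| ≤ q)
    (ht : t*sc = r) (ht_nonneg : 0 ≤ t)
    (I1 : L^2*(u*v) = v^2*(sa*r) + 2*E*(p-2*sa)*r) :
    |L^2 - sa*r| ≤ (r + 2*t)*(sa*r) := by
  have hps := abs_le.mp hp2sa
  have huvb := abs_le.mp huv
  have hXuv : (L^2 - sa*r) * (u*v) = sa*r*v*(v-u) + 2*E*(p - 2*sa)*r := by
    linear_combination I1
  have hup : |L^2 - sa*r| * (u*v) = |(L^2 - sa*r) * (u*v)| := by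
    rw [abs_mul, _root_.abs_of_pos (mul_pos hu_pos hv_pos)]
  have f3a : E*(p - 2*sa) ≤ E*q := mul_le_mul_of_nonneg_left hps.2 hEpos.le
  have f3a' : E*(-q) ≤ E*(p - 2*sa) := mul_le_mul_of_nonneg_left hps.1 hEpos.le
  have f3b : 0 ≤ (1-E)*q := mul_nonneg (by linarith) hq_nonneg
  have f4 : (2*r)*q ≤ (2*r)*(0.6*r) := mul_le_mul_of_nonneg_left hq_ub (by linarith)
  have f3c : (2*r)*(E*(p-2*sa)) ≤ (2*r)*(E*q) :=
    mul_le_mul_of_nonneg_left f3a (by linarith)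
  have f3c' : (2*r)*(E*(-q)) ≤ (2*r)*(E*(p-2*sa)) :=
    mul_le_mul_of_nonneg_left f3a' (by linarith)
  have f3d : 0 ≤ (2*r)*((1-E)*q) := mul_nonneg (by linarith) f3b
  have hbound : |(L^2 - sa*r) * (u*v)| ≤ 2*(sa*r)*r + 1.2*(r*r) := by
    rw [abs_le]
    constructor
    · rw [hXuv]
      have g1 : 0 ≤ sa*r*v*((v-u)+r) :=
        mul_nonneg (mul_nonneg (mul_nonneg hsa_pos.le hr_pos.le) hv_pos.le)
          (by linarith [huvb.1])
      have g2 : 0 ≤ sa*r*r*(2-v) :=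
        mul_nonneg (mul_nonneg (mul_nonneg hsa_pos.le hr_pos.le) hr_pos.le)
          (by linarith)
      nlinarith [g1, g2, f3c', f3d, f4]
    · rw [hXuv]
      have f1 : 0 ≤ sa*r*v*(r-(v-u)) :=
        mul_nonneg (mul_nonneg (mul_nonneg hsa_pos.le hr_pos.le) hv_pos.le)
          (by linarith [huvb.2])
      have f2 : 0 ≤ sa*r*r*(2-v) :=
        mul_nonneg (mul_nonneg (mul_nonneg hsa_pos.le hr_pos.le) hr_pos.le)
          (by linarith)
      nlinarith [f1, f2, f3c, f3d, f4]
  have hX342 : |L^2 - sa*r| * 3.42 ≤ |L^2 - sa*r| * (u*v) :=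
    mul_le_mul_of_nonneg_left huv33 (abs_nonneg _)
  have htsa : r ≤ t*sa := by
    have h := mul_nonneg ht_nonneg (sub_nonneg.mpr hsc_le_sa)
    nlinarith [h, ht]
  have htsar : r*r ≤ t*sa*r := mul_le_mul_of_nonneg_right htsa hr_pos.le
  nlinarith [hX342, hup, hbound, htsar, abs_nonneg (L^2 - sa*r),
    mul_nonneg (mul_nonneg hsa_pos.le hr_pos.le) hr_pos.le]

private lemma LA_ineq (L A sa r t : ℝ) (hA_pos : 0 < A) (hL_nonneg : 0 ≤ L)
    (hA2 : A^2 = sa*r) (hKey : |L^2 - sa*r| ≤ (r + 2*t)*(sa*r)) :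
    |L - A| ≤ (r + 2*t)*A := by
  have hsq : (L-A)*(L+A) = L^2 - sa*r := by rw [← hA2]; ring
  have h6 : |L - A| * (L+A) ≤ (r+2*t)*(sa*r) := by
    rw [← _root_.abs_of_nonneg (by linarith : (0:ℝ) ≤ L+A), ← abs_mul, hsq]
    exact hKey
  have h7 : |L - A| * A ≤ ((r+2*t)*A) * A := by
    have hA2r : r*A^2 = r*(sa*r) := by rw [hA2]
    have hA2t : t*A^2 = t*(sa*r) := by rw [hA2]
    nlinarith [h6, mul_nonneg (abs_nonneg (L-A)) hL_nonneg, hA2r, hA2t]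
  exact le_of_mul_le_mul_right h7 hA_pos

private lemma A_small (A sa sc r c : ℝ) (hA_pos : 0 < A) (hA2 : A^2 = sa*r)
    (hsa_ub : sa ≤ 1.4143*sc) (hr_ub : r ≤ 1.5*sc) (hr_pos : 0 < r)
    (hsc_pos : 0 < sc) (hsc_sq : sc*sc = c) (hc0 : c < 1/10000) :
    A ≤ 0.016 := by
  have h := mul_le_mul hsa_ub hr_ub hr_pos.le (by positivity)
  nlinarith [hA2, sq_nonneg (A - 0.016), h, hsc_sq, hc0]

private lemma eps_bound (L N A r t s M : ℝ)
    (hA_pos : 0 < A) (hL_nonneg : 0 ≤ L)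
    (hLA : |L - A| ≤ (r + 2*t)*A) (hN1 : |N - 1| ≤ L)
    (hr_le_t : r ≤ t) (hA_s : A ≤ 1.2*s) (hL_ub : L ≤ 4.1*A)
    (hN_lb : 0.9 ≤ N) (hM1 : t ≤ M) (hM2 : s ≤ M) (hM0 : 0 ≤ M)
    (hs_nonneg : 0 ≤ s) :
    |2*L/N/(2*A) - 1| ≤ 100 * M := by
  have hN_pos : (0:ℝ) < N := by linarith
  have hεeq : 2*L/N/(2*A) - 1 = (L - N*A)/(N*A) := by
    field_simp
  have hNA_pos : 0 < N*A := mul_pos hN_pos hA_pos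
  rw [hεeq, abs_div, _root_.abs_of_pos hNA_pos, div_le_iff₀ hNA_pos]
  have htri : |L - N*A| ≤ |L - A| + A*|N - 1| := by
    have h12 : L - N*A = (L - A) + -(A*(N-1)) := by ring
    rw [h12]
    refine (abs_add_le _ _).trans ?_
    rw [abs_neg, abs_mul, _root_.abs_of_pos hA_pos]
  have hL5 : L ≤ 5*M := by linarith
  have hstep1 : |L - A| ≤ 3*M*A := by
    have hd3 : r + 2*t ≤ 3*M := by linarith
    have h := mul_le_mul_of_nonneg_right hd3 hA_pos.le
    linarith
  have hstep2 : A*|N-1| ≤ A*(5*M) :=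
    mul_le_mul_of_nonneg_left (hN1.trans hL5) hA_pos.le
  have h14 : 0 ≤ (N - 0.9)*(M*A) :=
    mul_nonneg (by linarith) (mul_nonneg hM0 hA_pos.le)
  nlinarith [htri, hstep1, hstep2, h14]


/-- For `w ∈ Δ` with `|w − e^{iβ}| ≤ β/2`,
`|f_c(w) − 1| = 2(e^c − 1)^{1/4}·|w − e^{iβ}|^{1/2}·(1 + O((|w−e^{iβ}|/c^{1/2}) ∨ c^{1/4}|w−e^{iβ}|^{1/2}))`. -/
theorem slitMap_distance_estimate :
    ∃ c₀ > (0:ℝ), ∃ C > (0:ℝ), ∀ c : ℝ, 0 < c → c < 1 → c < c₀ →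
      ∀ w : ℂ, 1 < ‖w‖ → ‖w - basePt c‖ ≤ βangle c / 2 →
        ∃ e : ℝ,
          |e| ≤ C * max (‖w - basePt c‖ / Real.sqrt c)
              (c ^ ((1:ℝ)/4) * ‖w - basePt c‖ ^ ((1:ℝ)/2)) ∧
          ‖slitMap c w - 1‖
            = 2 * (Real.exp c - 1) ^ ((1:ℝ)/4) *
                ‖w - basePt c‖ ^ ((1:ℝ)/2) * (1 + e) := by
  refine ⟨1/10000, by norm_num, 100, by norm_num, fun c hc hc1 hc0 w hw hwβ => ?_⟩
  set r : ℝ := ‖w - basePt c‖ with hr_def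
  set sc : ℝ := Real.sqrt c with hsc_def
  set E : ℝ := Real.exp (-c) with hE_def
  set a : ℝ := Real.exp c - 1 with ha_def
  set sa : ℝ := Real.sqrt a with hsa_def
  -- basic real facts
  have hsc_pos : 0 < sc := Real.sqrt_pos.mpr hc
  have hsc_sq : sc * sc = c := Real.mul_self_sqrt hc.le
  have hsc_le : sc ≤ 1/100 := by nlinarith [Real.sqrt_nonneg c]
  have hEpos : 0 < E := Real.exp_pos _
  have hee : E * Real.exp c = 1 := by rw [hE_def, ← Real.exp_add]; simp
  have hE0 : 1 - c ≤ E := by nlinarith [Real.add_one_le_exp (-c)]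
  have hE1 : E ≤ 1 := by nlinarith [Real.add_one_le_exp c, Real.exp_pos c]
  have hca : c ≤ a := by nlinarith [Real.add_one_le_exp c]
  have ha_pos : 0 < a := lt_of_lt_of_le hc hca
  have ha2c : a ≤ 2 * c := by nlinarith [Real.exp_pos c]
  have hsa2 : sa * sa = a := Real.mul_self_sqrt ha_pos.le
  have hsa_pos : 0 < sa := Real.sqrt_pos.mpr ha_pos
  have hsc_le_sa : sc ≤ sa := Real.sqrt_le_sqrt hca
  have hsa_ub : sa ≤ 1.4143 * sc := by nlinarith [hsa_pos.le, hsc_pos.le]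
  -- basePt facts
  have hsa2C : ((sa:ℝ):ℂ) * ((sa:ℝ):ℂ) = ((a:ℝ):ℂ) := by
    rw [← Complex.ofReal_mul, hsa2]
  have heeC : ((E:ℝ):ℂ) * ((Real.exp c : ℝ):ℂ) = 1 := by
    rw [← Complex.ofReal_mul, hee]; norm_num
  have haC : ((a:ℝ):ℂ) = ((Real.exp c : ℝ):ℂ) - 1 := by
    rw [ha_def]; push_cast; ring
  have habs_b_sq : (‖basePt c‖)^2 = 1 := by
    rw [Complex.sq_norm, Complex.normSq_apply]
    simp only [basePt, Complex.add_re, Complex.add_im, Complex.ofReal_re, Complex.ofReal_im,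
      Complex.mul_re, Complex.mul_im, Complex.I_re, Complex.I_im]
    rw [← hE_def, ← ha_def, ← hsa_def]
    linear_combination (4*E^2) * hsa2 + (4*E) * hee
  have habs_b : ‖basePt c‖ = 1 := by
    have h0 := norm_nonneg (basePt c)
    nlinarith [habs_b_sq]
  have hv2 : (‖basePt c + 1‖)^2 = 4 * E := by
    rw [Complex.sq_norm, Complex.normSq_apply]
    simp only [basePt, Complex.add_re, Complex.add_im, Complex.ofReal_re, Complex.ofReal_im,
      Complex.mul_re, Complex.mul_im, Complex.I_re, Complex.I_im, Complex.one_re, Complex.one_im]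
    rw [← hE_def, ← ha_def, ← hsa_def]
    linear_combination (4*E^2) * hsa2 + (4*E) * hee
  set v : ℝ := ‖basePt c + 1‖ with hv_def
  set u : ℝ := ‖w + 1‖ with hu_def
  have hv_lb : 1.9 ≤ v := by nlinarith [norm_nonneg (basePt c + 1)]
  have hv_ub : v ≤ 2 := by nlinarith [norm_nonneg (basePt c + 1)]
  -- the angle bound
  have hβ : βangle c ≤ 3 * sc := by
    have hre : (basePt c).re = 2*E - 1 := by simp [basePt, ← hE_def]
    have him : (basePt c).im = 2*E*sa := by
      simp [basePt, ← hE_def, ← ha_def, ← hsa_def]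
    have hre0 : 0 ≤ (basePt c).re := by rw [hre]; nlinarith
    rw [βangle, Complex.arg_of_re_nonneg hre0, habs_b, him]
    have hmem : 3 * sc ∈ Set.Ico (-(π/2)) (π/2) := by
      constructor
      · nlinarith [Real.pi_gt_three]
      · nlinarith [Real.pi_gt_three]
    rw [div_one, Real.arcsin_le_iff_le_sin' hmem]
    have hsin := Real.sin_gt_sub_cube (by nlinarith : (0:ℝ) < 3*sc)
    nlinarith [hsin, hsa_ub, mul_nonneg (sub_nonneg.mpr hE1) hsa_pos.le, hsc_sq,
      mul_pos hsc_pos hsc_pos]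
  -- r bounds
  have hr_ub : r ≤ 1.5 * sc := by nlinarith [hwβ, hβ]
  have hr_pos : 0 < r := by
    have h := abs_norm_sub_norm_le w (basePt c)
    rw [habs_b, ← hr_def] at h
    have h2 := abs_le.mp h
    nlinarith [h2.1, h2.2]
  -- u, v comparison
  have huv : |u - v| ≤ r := by
    have h := abs_norm_sub_norm_le (w + 1) (basePt c + 1)
    have h2 : w + 1 - (basePt c + 1) = w - basePt c := by ring
    rw [h2, ← hr_def, ← hu_def, ← hv_def] at h
    exact h
  have hu_lb : 1.8 ≤ u := by
    have h2 := abs_le.mp huv; nlinarith [h2.1, hr_ub]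
  have hu_pos : (0:ℝ) < u := by linarith
  have hv_pos : (0:ℝ) < v := by linarith
  have hw1 : w + 1 ≠ 0 := by
    intro h; rw [hu_def, h] at hu_pos; simp at hu_pos
  have hb1 : basePt c + 1 ≠ 0 := by
    intro h; rw [hv_def, h] at hv_pos; simp at hv_pos
  -- mHalf of basePt
  have hmb : mHalf (basePt c) = -((sa:ℝ):ℂ) := by
    rw [mHalf, div_eq_iff hb1]
    simp only [basePt]
    rw [← hE_def, ← ha_def, ← hsa_def]
    push_cast at hsa2C heeC haC ⊢
    linear_combination (2*Complex.I*((E:ℝ):ℂ)) * hsa2C + 2*Complex.I * heeC +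
      (2*((E:ℝ):ℂ)*((sa:ℝ):ℂ)) * Complex.I_mul_I + (2*Complex.I*((E:ℝ):ℂ)) * haC
  -- q identity
  set q : ℝ := ‖mHalf w + ((sa:ℝ):ℂ)‖ with hq_def
  set p : ℝ := ‖mHalf w - ((sa:ℝ):ℂ)‖ with hp_def
  have hqId : q * (u * v) = 2 * r := by
    have h0 : mHalf w - mHalf (basePt c)
        = 2*Complex.I*(w - basePt c)/((w+1)*(basePt c+1)) := by
      rw [mHalf, mHalf]; field_simp; ring
    rw [hmb, sub_neg_eq_add] at h0
    have h1 : q = 2 * r / (u * v) := by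
      rw [hq_def, h0, norm_div, norm_mul, norm_mul, Complex.norm_two, Complex.norm_I,
        norm_mul, ← hr_def, ← hu_def, ← hv_def]; ring
    rw [h1]; field_simp
  have hq_nonneg : 0 ≤ q := norm_nonneg _
  have huv33 : (3.42:ℝ) ≤ u * v := by
    have := mul_le_mul hu_lb hv_lb (by norm_num) (by linarith : (0:ℝ) ≤ u)
    linarith
  have hp2sa : |p - 2*sa| ≤ q := by
    have h := abs_norm_sub_norm_le (mHalf w - ((sa:ℝ):ℂ)) (-(2*((sa:ℝ):ℂ)))
    have h2 : mHalf w - ((sa:ℝ):ℂ) - -(2*((sa:ℝ):ℂ)) = mHalf w + ((sa:ℝ):ℂ) := by ring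
    have h3 : ‖-(2*((sa:ℝ):ℂ))‖ = 2*sa := by
      rw [norm_neg, norm_mul, Complex.norm_two, Complex.norm_real, Real.norm_eq_abs,
        _root_.abs_of_nonneg hsa_pos.le]
    rw [h2, h3, ← hq_def, ← hp_def] at h
    exact h
  have hp_nonneg : 0 ≤ p := norm_nonneg _
  -- |z| computation
  set z : ℂ := halfPlaneSlit c (mHalf w) with hz_def
  set L : ℝ := ‖z‖ with hL_def
  set N : ℝ := ‖1 + Complex.I * z‖ with hN_def
  have hfac : (mHalf w)^2 - ((a:ℝ):ℂ) = (mHalf w - ((sa:ℝ):ℂ))*(mHalf w + ((sa:ℝ):ℂ)) := by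
    linear_combination hsa2C
  have hL_nonneg : 0 ≤ L := norm_nonneg _
  have hL2 : L^2 = E * (p * q) := by
    have hLeq : L = Real.exp (-c/2) * Real.sqrt (p * q) := by
      rw [hL_def, hz_def, halfPlaneSlit, norm_mul, Complex.norm_real, Real.norm_eq_abs,
        _root_.abs_of_nonneg (Real.exp_pos _).le, ← ha_def, hfac, abs_sqrtBranch, norm_mul,
        ← hp_def, ← hq_def]
    have h1 : Real.exp (-c/2) ^ 2 = E := by
      rw [hE_def, sq, ← Real.exp_add]; norm_num
    rw [hLeq, mul_pow, h1, Real.sq_sqrt (mul_nonneg hp_nonneg hq_nonneg)]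
  have hN1 : |N - 1| ≤ L := by
    have h := abs_norm_sub_norm_le (1 + Complex.I*z) 1
    have h2 : 1 + Complex.I*z - 1 = Complex.I*z := by ring
    rw [h2, norm_one, norm_mul, Complex.norm_I, one_mul, ← hL_def, ← hN_def] at h
    exact h
  -- pure real estimates from here
  clear_value r sc E a sa u v q p z L N
  clear hwβ hw hw1 hb1 hsa2C heeC haC habs_b_sq habs_b hβ hmb hfac
  clear hr_def hq_def hp_def hu_def hv_def hE_def hee
  have hq_ub : q ≤ (0.6:ℝ) * r := by
    have h := mul_le_mul_of_nonneg_left huv33 hq_nonneg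
    linarith [hqId, h]
  set t : ℝ := r / sc with ht_def
  have ht : t * sc = r := by rw [ht_def]; field_simp
  have ht_nonneg : 0 ≤ t := div_nonneg hr_pos.le hsc_pos.le
  have ht_ub : t ≤ 1.5 := by
    rw [ht_def, div_le_iff₀ hsc_pos]; linarith
  have hr_le_t : r ≤ t := by
    have h := mul_le_mul_of_nonneg_left hsc_le ht_nonneg
    linarith [ht]
  have hr_small : r ≤ 0.015 := by linarith
  have I1 : L^2 * (u*v) = v^2 * (sa*r) + 2*E*(p - 2*sa)*r := by
    linear_combination (u*v)*hL2 + (E*p)*hqId - (sa*r)*hv2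
  have hKey : |L^2 - sa*r| ≤ (r + 2*t) * (sa*r) :=
    key_ineq E sc sa r t u v q p L hEpos hE1 hsc_pos hsa_pos hsc_le_sa hr_pos
      hu_pos hv_pos hv_ub huv huv33 hq_nonneg hqId hq_ub hp2sa ht ht_nonneg I1
  -- A and its bounds
  set A : ℝ := a ^ ((1:ℝ)/4) * r ^ ((1:ℝ)/2) with hA_def
  have hA_pos : 0 < A := by
    rw [hA_def]; positivity
  have hA2 : A^2 = sa * r := by
    have h4 : (a ^ ((1:ℝ)/4))^2 = sa := by
      rw [← Real.rpow_natCast (a ^ ((1:ℝ)/4)) 2, ← Real.rpow_mul ha_pos.le]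
      have he : (1:ℝ)/4 * ((2:ℕ):ℝ) = 1/2 := by norm_num
      rw [he, hsa_def, Real.sqrt_eq_rpow]
    have h5 : (r ^ ((1:ℝ)/2))^2 = r := by
      rw [← Real.rpow_natCast (r ^ ((1:ℝ)/2)) 2, ← Real.rpow_mul hr_pos.le]
      have he : (1:ℝ)/2 * ((2:ℕ):ℝ) = 1 := by norm_num
      rw [he, Real.rpow_one]
    rw [hA_def, mul_pow, h4, h5]
  have hLA : |L - A| ≤ (r + 2*t) * A := LA_ineq L A sa r t hA_pos hL_nonneg hA2 hKey
  have hA_ub : A ≤ 0.016 :=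
    A_small A sa sc r c hA_pos hA2 hsa_ub hr_ub hr_pos hsc_pos hsc_sq hc0
  have hd_ub : r + 2*t ≤ 3.1 := by linarith
  have hL_ub : L ≤ 4.1*A := by
    have h2 := abs_le.mp hLA
    have h := mul_le_mul_of_nonneg_right hd_ub hA_pos.le
    linarith [h2.2]
  have hL_small : L ≤ 0.07 := by linarith
  have hN_lb : (0.9:ℝ) ≤ N := by
    have h2 := abs_le.mp hN1; linarith [h2.1]
  have hN_pos : (0:ℝ) < N := by linarith
  -- f - 1 formula
  have hIz_ne : 1 + Complex.I * z ≠ 0 := by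
    intro h
    have : N = 0 := by rw [hN_def, h, norm_zero]
    linarith
  have habs_f : ‖slitMap c w - 1‖ = 2*L/N := by
    have hf1 : slitMap c w - 1 = -(2*Complex.I*z)/(1 + Complex.I*z) := by
      rw [slitMap, ← hz_def]
      exact mDisc_sub_one z hIz_ne
    rw [hf1, norm_div, norm_neg, norm_mul, norm_mul, Complex.norm_two, Complex.norm_I,
      ← hL_def, ← hN_def]
    ring
  -- assemble
  set s : ℝ := c ^ ((1:ℝ)/4) * r ^ ((1:ℝ)/2) with hs_def
  have hs_nonneg : 0 ≤ s := by rw [hs_def]; positivity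
  have hA_s : A ≤ 1.2 * s := by
    have h7 : a ^ ((1:ℝ)/4) ≤ (2*c) ^ ((1:ℝ)/4) :=
      Real.rpow_le_rpow ha_pos.le ha2c (by norm_num)
    have h8 : (2*c) ^ ((1:ℝ)/4) = 2 ^ ((1:ℝ)/4) * c ^ ((1:ℝ)/4) :=
      Real.mul_rpow (by norm_num) hc.le
    have h10 : (0:ℝ) ≤ r ^ ((1:ℝ)/2) := Real.rpow_nonneg hr_pos.le _
    have h11 : (0:ℝ) ≤ c ^ ((1:ℝ)/4) := Real.rpow_nonneg hc.le _
    have h12 := mul_le_mul_of_nonneg_right h7 h10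
    have h13 := mul_le_mul_of_nonneg_right
      (mul_le_mul_of_nonneg_right two_rpow_le h11) h10
    rw [hA_def, hs_def]
    rw [h8] at h12
    linarith [h12, h13]
  set M : ℝ := max t s with hM_def
  have hM1 : t ≤ M := le_max_left _ _
  have hM2 : s ≤ M := le_max_right _ _
  have hM0 : 0 ≤ M := le_trans ht_nonneg hM1
  refine ⟨2*L/N/(2*A) - 1, ?_, ?_⟩
  · exact eps_bound L N A r t s M hA_pos hL_nonneg hLA hN1 hr_le_t hA_s hL_ub
      hN_lb hM1 hM2 hM0 hs_nonneg
  · rw [habs_f]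
    have h13 : 2 * a ^ ((1:ℝ)/4) * r ^ ((1:ℝ)/2) * (1 + (2*L/N/(2*A) - 1))
        = 2*A*(2*L/N/(2*A)) := by rw [hA_def]; ring
    rw [h13, cancel_helper L N A (ne_of_gt hN_pos) (ne_of_gt hA_pos)]
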